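/- Let G₁ and G₂ be two simple directed graphs on the same vertex set realizing the same bi-degree sequence (d⁺, d⁻). Then there exists a finite sequence of two-edge swaps and three-edge (triangle-reversal) swaps transforming G₁ into G₂, each intermediate graph being a simple directed graph realizing (d⁺, d⁻). -/

import Mathlib

/-- Out-degree of `v` in the digraph with (boolean) adjacency `E`. -/
def outDeg {n : ℕ} (E : Fin n → Fin n → Bool) (v : Fin n) : ℕ :=
  (Finset.univ.filter (fun w => E v w = true)).card

/-- In-degree of `v` in the digraph with (boolean) adjacency `E`. -/
def inDeg {n : ℕ} (E : Fin n → Fin n → Bool) (v : Fin n) : ℕ :=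
  (Finset.univ.filter (fun w => E w v = true)).card

/-- `E` is a simple directed graph (no loops; at most one edge in each
direction) realizing the bi-degree sequence `(dp, dm)`. -/
def Realizes {n : ℕ} (E : Fin n → Fin n → Bool) (dp dm : Fin n → ℕ) : Prop :=
  (∀ v, E v v = false) ∧ ∀ v, outDeg E v = dp v ∧ inDeg E v = dm v

/-- A bi-degree sequence is bi-graphical if some simple digraph realizes it. -/
def BiGraphical (n : ℕ) (dp dm : Fin n → ℕ) : Prop :=
  ∃ E : Fin n → Fin n → Bool, Realizes E dp dm

/-- A two-edge swap: the edges `a→b`, `c→d` (present) are replaced by `a→d`,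
`c→b` (previously absent, non-loops). -/
def TwoSwap {n : ℕ} (E E' : Fin n → Fin n → Bool) : Prop :=
  ∃ a b c d : Fin n,
    a ≠ b ∧ c ≠ d ∧ a ≠ d ∧ c ≠ b ∧
    E a b = true ∧ E c d = true ∧ E a d = false ∧ E c b = false ∧
    ∀ x y, E' x y =
      (if (x = a ∧ y = b) ∨ (x = c ∧ y = d) then false
       else if (x = a ∧ y = d) ∨ (x = c ∧ y = b) then true
       else E x y)

/-- A three-edge swap: the directed triangle `a→b→c→a` is reversed
(its reversal being previously absent). -/
def ThreeSwap {n : ℕ} (E E' : Fin n → Fin n → Bool) : Prop :=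
  ∃ a b c : Fin n,
    a ≠ b ∧ b ≠ c ∧ a ≠ c ∧
    E a b = true ∧ E b c = true ∧ E c a = true ∧
    E b a = false ∧ E c b = false ∧ E a c = false ∧
    ∀ x y, E' x y =
      (if (x = a ∧ y = b) ∨ (x = b ∧ y = c) ∨ (x = c ∧ y = a) then false
       else if (x = b ∧ y = a) ∨ (x = c ∧ y = b) ∨ (x = a ∧ y = c) then true
       else E x y)

/-- A swap is a two-edge swap or a three-edge swap. -/
def Swap {n : ℕ} (E E' : Fin n → Fin n → Bool) : Prop :=
  TwoSwap E E' ∨ ThreeSwap E E'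

namespace SwapProof

variable {n : ℕ}

/-- number of positions where two digraphs differ -/
def diffC (E F : Fin n → Fin n → Bool) : ℕ :=
  ((Finset.univ : Finset (Fin n × Fin n)).filter
    (fun p => E p.1 p.2 ≠ F p.1 p.2)).card

lemma diffC_comm (E F : Fin n → Fin n → Bool) : diffC E F = diffC F E := by
  unfold diffC
  congr 1
  apply Finset.filter_congr
  intro p _
  simp [ne_comm]

lemma diffC_eq_zero {E F : Fin n → Fin n → Bool} (h : diffC E F = 0) : E = F := by
  funext x y
  by_contra hne
  have hmem : ((x,y) : Fin n × Fin n) ∈ (Finset.univ : Finset (Fin n × Fin n)).filter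
      (fun p => E p.1 p.2 ≠ F p.1 p.2) := by
    simp [hne]
  unfold diffC at h
  have := Finset.card_pos.mpr ⟨_, hmem⟩
  omega

/-- main bookkeeping lemma: if `Enew` agrees with `E` outside `s`, then the
difference counts can be compared via sums over `s`. -/
lemma diffC_update (E Enew F : Fin n → Fin n → Bool) (s : Finset (Fin n × Fin n))
    (h : ∀ p : Fin n × Fin n, p ∉ s → Enew p.1 p.2 = E p.1 p.2) :
    diffC Enew F + (s.filter (fun p => E p.1 p.2 ≠ F p.1 p.2)).card
      = diffC E F + (s.filter (fun p => Enew p.1 p.2 ≠ F p.1 p.2)).card := by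
  classical
  have key : ∀ (G : Fin n → Fin n → Bool),
      diffC G F = ((sᶜ : Finset (Fin n × Fin n)).filter (fun p => G p.1 p.2 ≠ F p.1 p.2)).card
        + (s.filter (fun p => G p.1 p.2 ≠ F p.1 p.2)).card := by
    intro G
    unfold diffC
    rw [← Finset.card_union_of_disjoint]
    · congr 1
      rw [← Finset.filter_union]
      congr 1
      ext p; simp only [Finset.mem_union, Finset.mem_compl, Finset.mem_univ, iff_true]; tauto
    · exact Finset.disjoint_filter_filter disjoint_compl_left
  rw [key Enew, key E]
  have : ((sᶜ : Finset (Fin n × Fin n)).filter (fun p => Enew p.1 p.2 ≠ F p.1 p.2)).card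
      = ((sᶜ : Finset (Fin n × Fin n)).filter (fun p => E p.1 p.2 ≠ F p.1 p.2)).card := by
    congr 1
    apply Finset.filter_congr
    intro p hp
    rw [h p (by simpa using hp)]
  omega

/-- one row/one column update preserves a filter-card when one element leaves
and another enters. -/
lemma card_filter_update (f fnew : Fin n → Bool) (x y : Fin n) (hxy : x ≠ y)
    (hfx : f x = true) (hfy : f y = false)
    (h : ∀ w, fnew w = if w = x then false else if w = y then true else f w) :
    (Finset.univ.filter (fun w => fnew w = true)).card
      = (Finset.univ.filter (fun w => f w = true)).card := by
  classical
  have hset : Finset.univ.filter (fun w => fnew w = true)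
      = insert y ((Finset.univ.filter (fun w => f w = true)).erase x) := by
    ext w
    by_cases hwx : w = x
    · subst hwx
      simp [h, hxy, hfx]
    · by_cases hwy : w = y
      · subst hwy
        simp [h, hxy.symm, hfy]
      · simp [h, hwx, hwy]
  rw [hset, Finset.card_insert_of_notMem (by simp [hfy]),
    Finset.card_erase_of_mem (by simp [hfx])]
  have : 0 < (Finset.univ.filter (fun w => f w = true)).card :=
    Finset.card_pos.mpr ⟨x, by simp [hfx]⟩
  omega


lemma realizes_twoSwap {E E' : Fin n → Fin n → Bool} (h : TwoSwap E E')
    {dp dm : Fin n → ℕ} (hR : Realizes E dp dm) : Realizes E' dp dm := by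
  classical
  obtain ⟨a, b, c, d, hab, hcd, had, hcb, hEab, hEcd, hEad, hEcb, hdef⟩ := h
  have hac : a ≠ c := by rintro rfl; rw [hEcd] at hEad; exact absurd hEad (by simp)
  have hbd : b ≠ d := by rintro rfl; rw [hEab] at hEad; exact absurd hEad (by simp)
  have rowa : ∀ w, E' a w = if w = b then false else if w = d then true else E a w := by
    intro w; rw [hdef]
    by_cases h1 : w = b <;> by_cases h2 : w = d <;>
      simp [h1, h2, hac, hbd, hbd.symm] <;> tauto
  have rowc : ∀ w, E' c w = if w = d then false else if w = b then true else E c w := by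
    intro w; rw [hdef]
    by_cases h1 : w = d <;> by_cases h2 : w = b <;>
      simp [h1, h2, hac, hac.symm, hbd, hbd.symm] <;> tauto
  have rowother : ∀ x, x ≠ a → x ≠ c → ∀ w, E' x w = E x w := by
    intro x hxa hxc w; rw [hdef]; simp [hxa, hxc]
  have colb : ∀ x, E' x b = if x = a then false else if x = c then true else E x b := by
    intro x; rw [hdef]
    by_cases h1 : x = a <;> by_cases h2 : x = c <;>
      simp [h1, h2, hac, hbd, hbd.symm] <;> tauto
  have cold : ∀ x, E' x d = if x = c then false else if x = a then true else E x d := by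
    intro x; rw [hdef]
    by_cases h1 : x = c <;> by_cases h2 : x = a <;>
      simp [h1, h2, hac, hac.symm, hbd, hbd.symm] <;> tauto
  have colother : ∀ y, y ≠ b → y ≠ d → ∀ x, E' x y = E x y := by
    intro y hyb hyd x; rw [hdef]; simp [hyb, hyd]
  have hout : ∀ v, outDeg E' v = outDeg E v := by
    intro v
    rcases eq_or_ne v a with rfl | hva
    · exact card_filter_update (E v) (E' v) b d hbd hEab hEad rowa
    rcases eq_or_ne v c with rfl | hvc
    · exact card_filter_update (E v) (E' v) d b hbd.symm hEcd hEcb rowc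
    · unfold outDeg; congr 1; apply Finset.filter_congr; intro w _
      simp [rowother v hva hvc w]
  have hin : ∀ v, inDeg E' v = inDeg E v := by
    intro v
    rcases eq_or_ne v b with rfl | hvb
    · exact card_filter_update (fun x => E x v) (fun x => E' x v) a c hac hEab hEcb colb
    rcases eq_or_ne v d with rfl | hvd
    · exact card_filter_update (fun x => E x v) (fun x => E' x v) c a hac.symm hEcd hEad cold
    · unfold inDeg; congr 1; apply Finset.filter_congr; intro w _
      simp [colother v hvb hvd w]
  refine ⟨?_, fun v => by rw [hout, hin]; exact hR.2 v⟩
  intro v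
  rw [hdef]
  have hvv := hR.1 v
  split_ifs with h1 h2
  · rfl
  · rcases h2 with ⟨rfl, h2⟩ | ⟨rfl, h2⟩
    · exact absurd h2 had
    · exact absurd h2 hcb
  · exact hvv

lemma realizes_threeSwap {E E' : Fin n → Fin n → Bool} (h : ThreeSwap E E')
    {dp dm : Fin n → ℕ} (hR : Realizes E dp dm) : Realizes E' dp dm := by
  classical
  obtain ⟨a, b, c, hab, hbc, hac, hEab, hEbc, hEca, hEba, hEcb, hEac, hdef⟩ := h
  have rowa : ∀ w, E' a w = if w = b then false else if w = c then true else E a w := by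
    intro w; rw [hdef]
    by_cases h1 : w = b <;> by_cases h2 : w = c <;>
      simp [h1, h2, hab, hbc, hac, hab.symm, hbc.symm, hac.symm] <;> tauto
  have rowb : ∀ w, E' b w = if w = c then false else if w = a then true else E b w := by
    intro w; rw [hdef]
    by_cases h1 : w = c <;> by_cases h2 : w = a <;>
      simp [h1, h2, hab, hbc, hac, hab.symm, hbc.symm, hac.symm] <;> tauto
  have rowc : ∀ w, E' c w = if w = a then false else if w = b then true else E c w := by
    intro w; rw [hdef]
    by_cases h1 : w = a <;> by_cases h2 : w = b <;>
      simp [h1, h2, hab, hbc, hac, hab.symm, hbc.symm, hac.symm] <;> tauto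
  have rowother : ∀ x, x ≠ a → x ≠ b → x ≠ c → ∀ w, E' x w = E x w := by
    intro x h1 h2 h3 w; rw [hdef]; simp [h1, h2, h3]
  have cola : ∀ x, E' x a = if x = c then false else if x = b then true else E x a := by
    intro x; rw [hdef]
    by_cases h1 : x = c <;> by_cases h2 : x = b <;>
      simp [h1, h2, hab, hbc, hac, hab.symm, hbc.symm, hac.symm] <;> tauto
  have colb : ∀ x, E' x b = if x = a then false else if x = c then true else E x b := by
    intro x; rw [hdef]
    by_cases h1 : x = a <;> by_cases h2 : x = c <;>
      simp [h1, h2, hab, hbc, hac, hab.symm, hbc.symm, hac.symm] <;> tauto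
  have colc : ∀ x, E' x c = if x = b then false else if x = a then true else E x c := by
    intro x; rw [hdef]
    by_cases h1 : x = b <;> by_cases h2 : x = a <;>
      simp [h1, h2, hab, hbc, hac, hab.symm, hbc.symm, hac.symm] <;> tauto
  have colother : ∀ y, y ≠ a → y ≠ b → y ≠ c → ∀ x, E' x y = E x y := by
    intro y h1 h2 h3 x; rw [hdef]; simp [h1, h2, h3]
  have hout : ∀ v, outDeg E' v = outDeg E v := by
    intro v
    rcases eq_or_ne v a with rfl | hva
    · exact card_filter_update (E v) (E' v) b c hbc hEab hEac rowa
    rcases eq_or_ne v b with rfl | hvb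
    · exact card_filter_update (E v) (E' v) c a (Ne.symm hac) hEbc hEba rowb
    rcases eq_or_ne v c with rfl | hvc
    · exact card_filter_update (E v) (E' v) a b hab hEca hEcb rowc
    · unfold outDeg; congr 1; apply Finset.filter_congr; intro w _
      simp [rowother v hva hvb hvc w]
  have hin : ∀ v, inDeg E' v = inDeg E v := by
    intro v
    rcases eq_or_ne v a with rfl | hva
    · exact card_filter_update (fun x => E x v) (fun x => E' x v) c b hbc.symm hEca hEba cola
    rcases eq_or_ne v b with rfl | hvb
    · exact card_filter_update (fun x => E x v) (fun x => E' x v) a c hac hEab hEcb colb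
    rcases eq_or_ne v c with rfl | hvc
    · exact card_filter_update (fun x => E x v) (fun x => E' x v) b a hab.symm hEbc hEac colc
    · unfold inDeg; congr 1; apply Finset.filter_congr; intro w _
      simp [colother v hva hvb hvc w]
  refine ⟨?_, fun v => by rw [hout, hin]; exact hR.2 v⟩
  intro v
  rw [hdef]
  have hvv := hR.1 v
  split_ifs with h1 h2
  · rfl
  · rcases h2 with ⟨rfl, h2⟩ | ⟨rfl, h2⟩ | ⟨rfl, h2⟩
    · exact absurd h2.symm hab
    · exact absurd h2.symm hbc
    · exact absurd h2 hac
  · exact hvv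

lemma realizes_swap {E E' : Fin n → Fin n → Bool} (h : Swap E E')
    {dp dm : Fin n → ℕ} (hR : Realizes E dp dm) : Realizes E' dp dm := by
  rcases h with h | h
  · exact realizes_twoSwap h hR
  · exact realizes_threeSwap h hR

lemma twoSwap_symm {E E' : Fin n → Fin n → Bool} (h : TwoSwap E E') : TwoSwap E' E := by
  obtain ⟨a, b, c, d, hab, hcd, had, hcb, hEab, hEcd, hEad, hEcb, hdef⟩ := h
  have hac : a ≠ c := by rintro rfl; rw [hEcd] at hEad; exact absurd hEad (by simp)
  have hbd : b ≠ d := by rintro rfl; rw [hEab] at hEad; exact absurd hEad (by simp)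
  refine ⟨a, d, c, b, had, hcb, hab, hcd, ?_, ?_, ?_, ?_, ?_⟩
  · rw [hdef]; simp [hbd.symm, hac]
  · rw [hdef]; simp [hbd, hac.symm, hac]
  · rw [hdef]; simp
  · rw [hdef]; simp [hac, hac.symm, hbd, hbd.symm]
  · intro x y
    by_cases h1 : (x = a ∧ y = d) ∨ (x = c ∧ y = b)
    · rw [if_pos h1]
      rcases h1 with ⟨rfl, rfl⟩ | ⟨rfl, rfl⟩
      · exact hEad
      · exact hEcb
    rw [if_neg h1]
    by_cases h2 : (x = a ∧ y = b) ∨ (x = c ∧ y = d)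
    · rw [if_pos h2]
      rcases h2 with ⟨rfl, rfl⟩ | ⟨rfl, rfl⟩
      · exact hEab
      · exact hEcd
    rw [if_neg h2, hdef x y, if_neg h2, if_neg h1]

lemma threeSwap_symm {E E' : Fin n → Fin n → Bool} (h : ThreeSwap E E') : ThreeSwap E' E := by
  obtain ⟨a, b, c, hab, hbc, hac, hEab, hEbc, hEca, hEba, hEcb, hEac, hdef⟩ := h
  refine ⟨a, c, b, hac, hbc.symm, hab, ?_, ?_, ?_, ?_, ?_, ?_, ?_⟩
  · rw [hdef]; simp [hab, hac, hbc, hab.symm, hac.symm, hbc.symm]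
  · rw [hdef]; simp [hab, hac, hbc, hab.symm, hac.symm, hbc.symm]
  · rw [hdef]; simp [hab, hac, hbc, hab.symm, hac.symm, hbc.symm]
  · rw [hdef]; simp [hab, hac, hbc, hab.symm, hac.symm, hbc.symm]
  · rw [hdef]; simp [hab, hac, hbc, hab.symm, hac.symm, hbc.symm]
  · rw [hdef]; simp [hab, hac, hbc, hab.symm, hac.symm, hbc.symm]
  · intro x y
    by_cases h1 : (x = a ∧ y = c) ∨ (x = c ∧ y = b) ∨ (x = b ∧ y = a)
    · rw [if_pos h1]
      rcases h1 with ⟨rfl, rfl⟩ | ⟨rfl, rfl⟩ | ⟨rfl, rfl⟩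
      · exact hEac
      · exact hEcb
      · exact hEba
    rw [if_neg h1]
    by_cases h2 : (x = c ∧ y = a) ∨ (x = b ∧ y = c) ∨ (x = a ∧ y = b)
    · rw [if_pos h2]
      rcases h2 with ⟨rfl, rfl⟩ | ⟨rfl, rfl⟩ | ⟨rfl, rfl⟩
      · exact hEca
      · exact hEbc
      · exact hEab
    rw [if_neg h2, hdef x y, if_neg (by tauto), if_neg (by tauto)]

lemma swap_symm {E E' : Fin n → Fin n → Bool} (h : Swap E E') : Swap E' E := by
  rcases h with h | h
  · exact Or.inl (twoSwap_symm h)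
  · exact Or.inr (threeSwap_symm h)

/-! ### Alternating closed walks -/

lemma zmod_cast_val {m : ℕ} [NeZero m] (x : ZMod m) : ((x.val : ℕ) : ZMod m) = x :=
  (ZMod.natCast_val x).trans (ZMod.cast_id _ _)

lemma zmod_ne_of {m s t : ℕ} (hs : s < m) (ht : t < m) (hst : s ≠ t) :
    (s : ZMod m) ≠ (t : ZMod m) := by
  haveI : NeZero m := ⟨by omega⟩
  intro h
  have := congrArg ZMod.val h
  rw [ZMod.val_natCast, ZMod.val_natCast, Nat.mod_eq_of_lt hs, Nat.mod_eq_of_lt ht] at this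
  exact hst this

/-- closed alternating walk of length `κ + 2` in the symmetric difference:
`E`-only edges `a i → b i` alternate with `E'`-only edges `a (i+1) → b i`. -/
def IsRBWalk (E E' : Fin n → Fin n → Bool) (κ : ℕ) (a b : ZMod (κ + 2) → Fin n) : Prop :=
  ∀ i : ZMod (κ + 2),
    (E (a i) (b i) = true ∧ E' (a i) (b i) = false) ∧
    (E' (a (i + 1)) (b i) = true ∧ E (a (i + 1)) (b i) = false)

lemma zmod_succ_val {m : ℕ} (i : ZMod (m + 2)) :
    (i + 1).val = (i.val + 1) % (m + 2) := by
  have h1 : (i + 1 : ZMod (m + 2)) = ((i.val + 1 : ℕ) : ZMod (m + 2)) := by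
    rw [Nat.cast_add, Nat.cast_one, zmod_cast_val]
  rw [h1, ZMod.val_natCast]

lemma walk_of_segment (E E' : Fin n → Fin n → Bool) (κ' : ℕ) (α β : ℕ → Fin n)
    (hred : ∀ s, s < κ' + 2 → E (α s) (β s) = true ∧ E' (α s) (β s) = false)
    (hblue : ∀ s, s + 1 < κ' + 2 → E' (α (s + 1)) (β s) = true ∧ E (α (s + 1)) (β s) = false)
    (hclose : E' (α 0) (β (κ' + 1)) = true ∧ E (α 0) (β (κ' + 1)) = false) :
    ∃ a b, IsRBWalk E E' κ' a b := by
  refine ⟨fun i => α i.val, fun i => β i.val, fun i => ⟨hred _ (ZMod.val_lt i), ?_⟩⟩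
  have hv := zmod_succ_val i
  by_cases hlt : i.val + 1 < κ' + 2
  · rw [Nat.mod_eq_of_lt hlt] at hv
    simpa only [hv] using hblue i.val hlt
  · have hi : i.val = κ' + 1 := by have := ZMod.val_lt i; omega
    have h0 : (i + 1).val = 0 := by rw [hv, hi]; simp
    show E' (α (i + 1).val) (β i.val) = true ∧ E (α (i + 1).val) (β i.val) = false
    rw [h0, hi]
    exact hclose

lemma bool_exchange (f g : Fin n → Bool)
    (hcard : (Finset.univ.filter (fun w => f w = true)).card
      = (Finset.univ.filter (fun w => g w = true)).card)
    (y : Fin n) (hg : g y = true) (hf : f y = false) :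
    ∃ w, f w = true ∧ g w = false := by
  classical
  by_contra hcon
  push_neg at hcon
  have hsub : Finset.univ.filter (fun w => f w = true)
      ⊆ Finset.univ.filter (fun w => g w = true) := by
    intro w hw
    simp only [Finset.mem_filter, Finset.mem_univ, true_and] at hw ⊢
    have := hcon w hw
    cases hgw : g w
    · exact absurd hgw this
    · rfl
  have heq := Finset.eq_of_subset_of_card_le hsub (le_of_eq hcard.symm)
  have : y ∈ Finset.univ.filter (fun w => f w = true) := by
    rw [heq]; simp [hg]
  simp [hf] at this

variable {dp dm : Fin n → ℕ}

lemma walk_step {E E' : Fin n → Fin n → Bool} (hE : Realizes E dp dm)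
    (hE' : Realizes E' dp dm) {x y : Fin n}
    (h : E x y = true ∧ E' x y = false) :
    ∃ x' y', (E' x' y = true ∧ E x' y = false) ∧ (E x' y' = true ∧ E' x' y' = false) := by
  have hcol : (Finset.univ.filter (fun w => E' w y = true)).card
      = (Finset.univ.filter (fun w => E w y = true)).card := by
    have h1 := (hE.2 y).2
    have h2 := (hE'.2 y).2
    unfold inDeg at h1 h2
    omega
  obtain ⟨x', hx'1, hx'2⟩ := bool_exchange (fun w => E' w y) (fun w => E w y) hcol x h.1 h.2
  have hrow : (Finset.univ.filter (fun w => E x' w = true)).card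
      = (Finset.univ.filter (fun w => E' x' w = true)).card := by
    have h1 := (hE.2 x').1
    have h2 := (hE'.2 x').1
    unfold outDeg at h1 h2
    omega
  obtain ⟨y', hy'1, hy'2⟩ := bool_exchange (fun w => E x' w) (fun w => E' x' w) hrow y hx'1 hx'2
  exact ⟨x', y', ⟨hx'1, hx'2⟩, ⟨hy'1, hy'2⟩⟩

lemma exists_red {E E' : Fin n → Fin n → Bool} (hE : Realizes E dp dm)
    (hE' : Realizes E' dp dm) (hne : diffC E E' ≠ 0) :
    ∃ x y, E x y = true ∧ E' x y = false := by
  classical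
  have : ((Finset.univ : Finset (Fin n × Fin n)).filter
      (fun p => E p.1 p.2 ≠ E' p.1 p.2)).Nonempty := by
    rw [Finset.nonempty_iff_ne_empty]
    intro hemp
    apply hne
    unfold diffC
    rw [hemp, Finset.card_empty]
  obtain ⟨⟨x, y⟩, hp⟩ := this
  simp only [Finset.mem_filter, Finset.mem_univ, true_and] at hp
  cases hxy : E x y
  · cases hxy' : E' x y
    · rw [hxy, hxy'] at hp; exact absurd rfl hp
    · -- blue edge; find a red one in the same row
      have hrow : (Finset.univ.filter (fun w => E x w = true)).card
          = (Finset.univ.filter (fun w => E' x w = true)).card := by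
        have h1 := (hE.2 x).1
        have h2 := (hE'.2 x).1
        unfold outDeg at h1 h2
        omega
      obtain ⟨w, hw1, hw2⟩ := bool_exchange (fun w => E x w) (fun w => E' x w) hrow y hxy' hxy
      exact ⟨x, w, hw1, hw2⟩
  · cases hxy' : E' x y
    · exact ⟨x, y, hxy, hxy'⟩
    · rw [hxy, hxy'] at hp; exact absurd rfl hp

lemma exists_walk {E E' : Fin n → Fin n → Bool} (hE : Realizes E dp dm)
    (hE' : Realizes E' dp dm) (hne : diffC E E' ≠ 0) :
    ∃ κ a b, IsRBWalk E E' κ a b := by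
  classical
  obtain ⟨x0, y0, hr0⟩ := exists_red hE hE' hne
  set RedT := {p : Fin n × Fin n // E p.1 p.2 = true ∧ E' p.1 p.2 = false} with hRedT
  have step : ∀ p : RedT, ∃ q : RedT,
      E' q.1.1 p.1.2 = true ∧ E q.1.1 p.1.2 = false := by
    rintro ⟨⟨x, y⟩, hp⟩
    obtain ⟨x', y', hb, hr⟩ := walk_step hE hE' hp
    exact ⟨⟨(x', y'), hr⟩, hb⟩
  let F : RedT → RedT := fun p => Classical.choose (step p)
  have hF : ∀ p : RedT, E' (F p).1.1 p.1.2 = true ∧ E (F p).1.1 p.1.2 = false :=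
    fun p => Classical.choose_spec (step p)
  let seq : ℕ → RedT := fun t => F^[t] ⟨(x0, y0), hr0⟩
  let A : ℕ → Fin n := fun t => (seq t).1.1
  let B : ℕ → Fin n := fun t => (seq t).1.2
  have hred : ∀ t, E (A t) (B t) = true ∧ E' (A t) (B t) = false := fun t => (seq t).2
  have hblue : ∀ t, E' (A (t + 1)) (B t) = true ∧ E (A (t + 1)) (B t) = false := by
    intro t
    have hs : seq (t + 1) = F (seq t) := Function.iterate_succ_apply' F t _
    have hh := hF (seq t)
    rw [← hs] at hh
    exact hh
  obtain ⟨t₁, t₂, hne12, heq⟩ := Finite.exists_ne_map_eq_of_infinite A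
  -- wlog t₁ < t₂
  obtain ⟨u₁, u₂, hlt, hequ⟩ : ∃ u₁ u₂, u₁ < u₂ ∧ A u₁ = A u₂ := by
    rcases lt_trichotomy t₁ t₂ with h | h | h
    · exact ⟨t₁, t₂, h, heq⟩
    · exact absurd h hne12
    · exact ⟨t₂, t₁, h, heq.symm⟩
  set k := u₂ - u₁ with hk
  have hk1 : k ≠ 1 := by
    intro h1
    have hu2 : u₂ = u₁ + 1 := by omega
    have hb := (hblue u₁).1
    rw [← hu2, ← hequ] at hb
    rw [(hred u₁).2] at hb
    exact absurd hb (by simp)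
  have hk2 : 2 ≤ k := by omega
  obtain ⟨κ, hκ⟩ : ∃ κ, k = κ + 2 := ⟨k - 2, by omega⟩
  refine ⟨κ, ?_⟩
  apply walk_of_segment E E' κ (fun s => A (u₁ + s)) (fun s => B (u₁ + s))
  · intro s _; exact hred _
  · intro s _
    have : u₁ + s + 1 = u₁ + (s + 1) := by omega
    rw [← this]
    exact hblue _
  · have h1 : u₁ + (κ + 1) + 1 = u₁ + k := by omega
    have h2 : A (u₁ + k) = A (u₁ + 0) := by
      have : u₁ + k = u₂ := by omega
      rw [this]; simpa using hequ.symm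
    have hb := hblue (u₁ + (κ + 1))
    rw [h1, h2] at hb
    simpa using hb

/-! ### Paths of swaps -/

def Reach (dp dm : Fin n → ℕ) (E F : Fin n → Fin n → Bool) : Prop :=
  ∃ (m : ℕ) (f : Fin (m + 1) → (Fin n → Fin n → Bool)),
    f 0 = E ∧ f (Fin.last m) = F ∧
    (∀ j, Realizes (f j) dp dm) ∧
    ∀ j : Fin m, Swap (f j.castSucc) (f j.succ)

lemma reach_refl {E : Fin n → Fin n → Bool} (hE : Realizes E dp dm) :
    Reach dp dm E E :=
  ⟨0, fun _ => E, rfl, rfl, fun _ => hE, fun j => j.elim0⟩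

lemma reach_single {E F : Fin n → Fin n → Bool} (hE : Realizes E dp dm)
    (hF : Realizes F dp dm) (hs : Swap E F) : Reach dp dm E F := by
  refine ⟨1, fun j => if j.val = 0 then E else F, by simp, by simp [Fin.last], ?_, ?_⟩
  · intro j
    by_cases h : j.val = 0 <;> simp [h, hE, hF]
  · intro j
    have hj : j = 0 := Subsingleton.elim _ _
    subst hj
    simpa using hs

lemma reach_trans {E F G : Fin n → Fin n → Bool} (h1 : Reach dp dm E F)
    (h2 : Reach dp dm F G) : Reach dp dm E G := by
  obtain ⟨m₁, f₁, hf10, hf1l, hf1r, hf1s⟩ := h1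
  obtain ⟨m₂, f₂, hf20, hf2l, hf2r, hf2s⟩ := h2
  classical
  refine ⟨m₁ + m₂, fun j => if h : j.val ≤ m₁ then f₁ ⟨j.val, by omega⟩
    else f₂ ⟨j.val - m₁, by have := j.isLt; omega⟩, ?_, ?_, ?_, ?_⟩
  · dsimp only
    rw [dif_pos (by simp)]
    refine Eq.trans (congrArg f₁ ?_) hf10
    exact Fin.ext (by simp)
  · dsimp only
    by_cases hm2 : m₂ = 0
    · subst hm2
      rw [dif_pos (by rw [Fin.val_last]; omega)]
      have hFG : F = G := by
        rw [← hf20, ← hf2l]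
        exact congrArg f₂ (Fin.ext (by simp))
      refine Eq.trans (congrArg f₁ ?_) (hf1l.trans hFG)
      exact Fin.ext (by simp [Fin.val_last])
    · rw [dif_neg (by rw [Fin.val_last]; omega)]
      refine Eq.trans (congrArg f₂ ?_) hf2l
      exact Fin.ext (by simp [Fin.val_last])
  · intro j
    dsimp only
    by_cases h : j.val ≤ m₁
    · rw [dif_pos h]; exact hf1r _
    · rw [dif_neg h]; exact hf2r _
  · intro j
    dsimp only
    have hcs : (j.castSucc).val = j.val := rfl
    have hsc : (j.succ).val = j.val + 1 := rfl
    by_cases h1 : j.val + 1 ≤ m₁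
    · rw [dif_pos (show (j.castSucc).val ≤ m₁ by rw [hcs]; omega),
        dif_pos (show (j.succ).val ≤ m₁ by rw [hsc]; omega)]
      have w := hf1s ⟨j.val, by omega⟩
      rw [show f₁ (Fin.castSucc ⟨j.val, by omega⟩)
          = f₁ ⟨(j.castSucc).val, by rw [hcs]; omega⟩ from
          congrArg f₁ (Fin.ext (by simp [hcs]))] at w
      rw [show f₁ (Fin.succ ⟨j.val, by omega⟩)
          = f₁ ⟨(j.succ).val, by rw [hsc]; omega⟩ from
          congrArg f₁ (Fin.ext (by simp [hsc]))] at w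
      exact w
    · by_cases h2 : j.val ≤ m₁
      · have hjm : j.val = m₁ := by omega
        have hm2 : 0 < m₂ := by have := j.isLt; omega
        rw [dif_pos (show (j.castSucc).val ≤ m₁ by rw [hcs]; omega),
          dif_neg (show ¬ (j.succ).val ≤ m₁ by rw [hsc]; omega)]
        have w := hf2s ⟨0, hm2⟩
        rw [show f₂ (Fin.castSucc ⟨0, hm2⟩) = F from
          (congrArg f₂ (Fin.ext (by simp))).trans hf20] at w
        rw [show f₂ (Fin.succ ⟨0, hm2⟩)
            = f₂ ⟨(j.succ).val - m₁, by have := j.isLt; omega⟩ from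
          congrArg f₂ (Fin.ext (by simp [hsc, hjm]))] at w
        have e1 : f₁ ⟨(j.castSucc).val, by rw [hcs]; omega⟩ = F := by
          refine Eq.trans (congrArg f₁ ?_) hf1l
          exact Fin.ext (by simp [Fin.val_last, hcs, hjm])
        rw [e1]
        exact w
      · rw [dif_neg (show ¬ (j.castSucc).val ≤ m₁ by rw [hcs]; omega),
          dif_neg (show ¬ (j.succ).val ≤ m₁ by rw [hsc]; omega)]
        have hlt : j.val - m₁ < m₂ := by have := j.isLt; omega
        have w := hf2s ⟨j.val - m₁, hlt⟩
        rw [show f₂ (Fin.castSucc ⟨j.val - m₁, hlt⟩)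
            = f₂ ⟨(j.castSucc).val - m₁, by have := j.isLt; omega⟩ from
          congrArg f₂ (Fin.ext (by simp [hcs]))] at w
        rw [show f₂ (Fin.succ ⟨j.val - m₁, hlt⟩)
            = f₂ ⟨(j.succ).val - m₁, by have := j.isLt; omega⟩ from
          congrArg f₂ (Fin.ext (by simp [hsc, Fin.succ]; omega))] at w
        exact w
/-! ### The key step lemma (proved later) and the main induction -/

lemma card_filter_quad (p1 p2 p3 p4 : Fin n × Fin n) (P : Fin n × Fin n → Prop)
    [DecidablePred P]
    (h12 : p1 ≠ p2) (h13 : p1 ≠ p3) (h14 : p1 ≠ p4)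
    (h23 : p2 ≠ p3) (h24 : p2 ≠ p4) (h34 : p3 ≠ p4) :
    (({p1, p2, p3, p4} : Finset (Fin n × Fin n)).filter P).card
      = (if P p1 then 1 else 0) + ((if P p2 then 1 else 0)
        + ((if P p3 then 1 else 0) + (if P p4 then 1 else 0))) := by
  rw [Finset.card_filter]
  rw [Finset.sum_insert (by simp [h12, h13, h14]),
    Finset.sum_insert (by simp [h23, h24]),
    Finset.sum_insert (by simp [h34]), Finset.sum_singleton]

-- ACTUAL NEW MATERIAL BELOW
open Classical in
noncomputable def twoSwapped (E : Fin n → Fin n → Bool) (x1 y1 x2 y2 : Fin n) :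
    Fin n → Fin n → Bool := fun x y =>
  if (x = x1 ∧ y = y1) ∨ (x = x2 ∧ y = y2) then false
  else if (x = x1 ∧ y = y2) ∨ (x = x2 ∧ y = y1) then true
  else E x y

lemma twoSwapped_isSwap (E : Fin n → Fin n → Bool) (x1 y1 x2 y2 : Fin n)
    (h1 : x1 ≠ y1) (h2 : x2 ≠ y2) (h3 : x1 ≠ y2) (h4 : x2 ≠ y1)
    (e11 : E x1 y1 = true) (e22 : E x2 y2 = true)
    (e12 : E x1 y2 = false) (e21 : E x2 y1 = false) :
    TwoSwap E (twoSwapped E x1 y1 x2 y2) :=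
  ⟨x1, y1, x2, y2, h1, h2, h3, h4, e11, e22, e12, e21, fun _ _ => rfl⟩

lemma twoSwapped_val11 (E : Fin n → Fin n → Bool) (x1 y1 x2 y2 : Fin n) :
    twoSwapped E x1 y1 x2 y2 x1 y1 = false := by
  unfold twoSwapped
  rw [if_pos (Or.inl ⟨rfl, rfl⟩)]

lemma twoSwapped_val22 (E : Fin n → Fin n → Bool) (x1 y1 x2 y2 : Fin n) :
    twoSwapped E x1 y1 x2 y2 x2 y2 = false := by
  unfold twoSwapped
  rw [if_pos (Or.inr ⟨rfl, rfl⟩)]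

lemma twoSwapped_val12 (E : Fin n → Fin n → Bool) (x1 y1 x2 y2 : Fin n)
    (hx : x1 ≠ x2) (hy : y1 ≠ y2) :
    twoSwapped E x1 y1 x2 y2 x1 y2 = true := by
  unfold twoSwapped
  rw [if_neg (by rintro (⟨-, h⟩ | ⟨h, -⟩); exact hy h.symm; exact hx h),
    if_pos (Or.inl ⟨rfl, rfl⟩)]

lemma twoSwapped_val21 (E : Fin n → Fin n → Bool) (x1 y1 x2 y2 : Fin n)
    (hx : x1 ≠ x2) (hy : y1 ≠ y2) :
    twoSwapped E x1 y1 x2 y2 x2 y1 = true := by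
  unfold twoSwapped
  rw [if_neg (by rintro (⟨h, -⟩ | ⟨-, h⟩); exact hx h.symm; exact hy h),
    if_pos (Or.inr ⟨rfl, rfl⟩)]

lemma twoSwapped_other (E : Fin n → Fin n → Bool) (x1 y1 x2 y2 x y : Fin n)
    (h1 : ¬(x = x1 ∧ y = y1)) (h2 : ¬(x = x2 ∧ y = y2))
    (h3 : ¬(x = x1 ∧ y = y2)) (h4 : ¬(x = x2 ∧ y = y1)) :
    twoSwapped E x1 y1 x2 y2 x y = E x y := by
  unfold twoSwapped
  rw [if_neg (by tauto), if_neg (by tauto)]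

lemma twoSwapped_diff (E F : Fin n → Fin n → Bool) (x1 y1 x2 y2 : Fin n)
    (hx : x1 ≠ x2) (hy : y1 ≠ y2) :
    diffC (twoSwapped E x1 y1 x2 y2) F
      + ((if E x1 y1 ≠ F x1 y1 then 1 else 0) + ((if E x2 y2 ≠ F x2 y2 then 1 else 0)
        + ((if E x1 y2 ≠ F x1 y2 then 1 else 0) + (if E x2 y1 ≠ F x2 y1 then 1 else 0))))
    = diffC E F
      + ((if (false : Bool) ≠ F x1 y1 then 1 else 0) + ((if (false : Bool) ≠ F x2 y2 then 1 else 0)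
        + ((if (true : Bool) ≠ F x1 y2 then 1 else 0) + (if (true : Bool) ≠ F x2 y1 then 1 else 0)))) := by
  classical
  have hp12 : ((x1, y1) : Fin n × Fin n) ≠ (x2, y2) := fun h => hx (congrArg Prod.fst h)
  have hp13 : ((x1, y1) : Fin n × Fin n) ≠ (x1, y2) := fun h => hy (congrArg Prod.snd h)
  have hp14 : ((x1, y1) : Fin n × Fin n) ≠ (x2, y1) := fun h => hx (congrArg Prod.fst h)
  have hp23 : ((x2, y2) : Fin n × Fin n) ≠ (x1, y2) := fun h => hx.symm (congrArg Prod.fst h)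
  have hp24 : ((x2, y2) : Fin n × Fin n) ≠ (x2, y1) := fun h => hy.symm (congrArg Prod.snd h)
  have hp34 : ((x1, y2) : Fin n × Fin n) ≠ (x2, y1) := fun h => hx (congrArg Prod.fst h)
  have hout : ∀ p : Fin n × Fin n,
      p ∉ ({(x1, y1), (x2, y2), (x1, y2), (x2, y1)} : Finset (Fin n × Fin n)) →
      twoSwapped E x1 y1 x2 y2 p.1 p.2 = E p.1 p.2 := by
    intro p hp
    simp only [Finset.mem_insert, Finset.mem_singleton, not_or] at hp
    obtain ⟨g1, g2, g3, g4⟩ := hp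
    refine twoSwapped_other E x1 y1 x2 y2 p.1 p.2 ?_ ?_ ?_ ?_ <;>
      · rintro ⟨u, v⟩
        first
          | exact g1 (Prod.ext u v)
          | exact g2 (Prod.ext u v)
          | exact g3 (Prod.ext u v)
          | exact g4 (Prod.ext u v)
  have key := diffC_update E (twoSwapped E x1 y1 x2 y2) F
    {(x1, y1), (x2, y2), (x1, y2), (x2, y1)} hout
  rw [card_filter_quad _ _ _ _ _ hp12 hp13 hp14 hp23 hp24 hp34,
    card_filter_quad _ _ _ _ _ hp12 hp13 hp14 hp23 hp24 hp34] at key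
  simp only [twoSwapped_val11, twoSwapped_val22, twoSwapped_val12 E x1 y1 x2 y2 hx hy,
    twoSwapped_val21 E x1 y1 x2 y2 hx hy] at key
  convert key using 2

lemma card_filter_six (p1 p2 p3 p4 p5 p6 : Fin n × Fin n) (P : Fin n × Fin n → Prop)
    [DecidablePred P]
    (h12 : p1 ≠ p2) (h13 : p1 ≠ p3) (h14 : p1 ≠ p4) (h15 : p1 ≠ p5) (h16 : p1 ≠ p6)
    (h23 : p2 ≠ p3) (h24 : p2 ≠ p4) (h25 : p2 ≠ p5) (h26 : p2 ≠ p6)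
    (h34 : p3 ≠ p4) (h35 : p3 ≠ p5) (h36 : p3 ≠ p6)
    (h45 : p4 ≠ p5) (h46 : p4 ≠ p6) (h56 : p5 ≠ p6) :
    (({p1, p2, p3, p4, p5, p6} : Finset (Fin n × Fin n)).filter P).card
      = (if P p1 then 1 else 0) + ((if P p2 then 1 else 0) + ((if P p3 then 1 else 0)
        + ((if P p4 then 1 else 0) + ((if P p5 then 1 else 0) + (if P p6 then 1 else 0))))) := by
  rw [Finset.card_filter]
  rw [Finset.sum_insert (by simp [h12, h13, h14, h15, h16]),
    Finset.sum_insert (by simp [h23, h24, h25, h26]),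
    Finset.sum_insert (by simp [h34, h35, h36]),
    Finset.sum_insert (by simp [h45, h46]),
    Finset.sum_insert (by simp [h56]), Finset.sum_singleton]

open Classical in
noncomputable def threeSwapped (E : Fin n → Fin n → Bool) (va vb vc : Fin n) :
    Fin n → Fin n → Bool := fun x y =>
  if (x = va ∧ y = vb) ∨ (x = vb ∧ y = vc) ∨ (x = vc ∧ y = va) then false
  else if (x = vb ∧ y = va) ∨ (x = vc ∧ y = vb) ∨ (x = va ∧ y = vc) then true
  else E x y

lemma threeSwapped_isSwap (E : Fin n → Fin n → Bool) (va vb vc : Fin n)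
    (hab : va ≠ vb) (hbc : vb ≠ vc) (hac : va ≠ vc)
    (eab : E va vb = true) (ebc : E vb vc = true) (eca : E vc va = true)
    (eba : E vb va = false) (ecb : E vc vb = false) (eac : E va vc = false) :
    ThreeSwap E (threeSwapped E va vb vc) :=
  ⟨va, vb, vc, hab, hbc, hac, eab, ebc, eca, eba, ecb, eac, fun _ _ => rfl⟩

lemma threeSwapped_diff (E F : Fin n → Fin n → Bool) (va vb vc : Fin n)
    (hab : va ≠ vb) (hbc : vb ≠ vc) (hac : va ≠ vc) :
    diffC (threeSwapped E va vb vc) F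
      + ((if E va vb ≠ F va vb then 1 else 0) + ((if E vb vc ≠ F vb vc then 1 else 0)
        + ((if E vc va ≠ F vc va then 1 else 0) + ((if E vb va ≠ F vb va then 1 else 0)
        + ((if E vc vb ≠ F vc vb then 1 else 0) + (if E va vc ≠ F va vc then 1 else 0))))))
    = diffC E F
      + ((if (false : Bool) ≠ F va vb then 1 else 0) + ((if (false : Bool) ≠ F vb vc then 1 else 0)
        + ((if (false : Bool) ≠ F vc va then 1 else 0) + ((if (true : Bool) ≠ F vb va then 1 else 0)
        + ((if (true : Bool) ≠ F vc vb then 1 else 0) + (if (true : Bool) ≠ F va vc then 1 else 0)))))) := by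
  classical
  have v1 : threeSwapped E va vb vc va vb = false := by
    unfold threeSwapped; rw [if_pos (Or.inl ⟨rfl, rfl⟩)]
  have v2 : threeSwapped E va vb vc vb vc = false := by
    unfold threeSwapped; rw [if_pos (Or.inr (Or.inl ⟨rfl, rfl⟩))]
  have v3 : threeSwapped E va vb vc vc va = false := by
    unfold threeSwapped; rw [if_pos (Or.inr (Or.inr ⟨rfl, rfl⟩))]
  have v4 : threeSwapped E va vb vc vb va = true := by
    unfold threeSwapped
    rw [if_neg (by
      rintro (⟨h, -⟩ | ⟨-, h⟩ | ⟨h, -⟩)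
      · exact hab h.symm
      · exact hac h
      · exact hbc h), if_pos (Or.inl ⟨rfl, rfl⟩)]
  have v5 : threeSwapped E va vb vc vc vb = true := by
    unfold threeSwapped
    rw [if_neg (by
      rintro (⟨h, -⟩ | ⟨-, h⟩ | ⟨-, h⟩)
      · exact hac h.symm
      · exact hbc h
      · exact hab h.symm), if_pos (Or.inr (Or.inl ⟨rfl, rfl⟩))]
  have v6 : threeSwapped E va vb vc va vc = true := by
    unfold threeSwapped
    rw [if_neg (by
      rintro (⟨-, h⟩ | ⟨h, -⟩ | ⟨h, -⟩)
      · exact hbc h.symm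
      · exact hab h
      · exact hac h), if_pos (Or.inr (Or.inr ⟨rfl, rfl⟩))]
  have hout : ∀ p : Fin n × Fin n,
      p ∉ ({(va, vb), (vb, vc), (vc, va), (vb, va), (vc, vb), (va, vc)} :
        Finset (Fin n × Fin n)) →
      threeSwapped E va vb vc p.1 p.2 = E p.1 p.2 := by
    intro p hp
    simp only [Finset.mem_insert, Finset.mem_singleton, not_or] at hp
    obtain ⟨g1, g2, g3, g4, g5, g6⟩ := hp
    unfold threeSwapped
    rw [if_neg, if_neg]
    · rintro (⟨u, v⟩ | ⟨u, v⟩ | ⟨u, v⟩)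
      · exact g4 (Prod.ext u v)
      · exact g5 (Prod.ext u v)
      · exact g6 (Prod.ext u v)
    · rintro (⟨u, v⟩ | ⟨u, v⟩ | ⟨u, v⟩)
      · exact g1 (Prod.ext u v)
      · exact g2 (Prod.ext u v)
      · exact g3 (Prod.ext u v)
  have key := diffC_update E (threeSwapped E va vb vc) F
    {(va, vb), (vb, vc), (vc, va), (vb, va), (vc, vb), (va, vc)} hout
  have d12 : ((va, vb) : Fin n × Fin n) ≠ (vb, vc) := fun h => hab (congrArg Prod.fst h)
  have d13 : ((va, vb) : Fin n × Fin n) ≠ (vc, va) := fun h => hac (congrArg Prod.fst h)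
  have d14 : ((va, vb) : Fin n × Fin n) ≠ (vb, va) := fun h => hab (congrArg Prod.fst h)
  have d15 : ((va, vb) : Fin n × Fin n) ≠ (vc, vb) := fun h => hac (congrArg Prod.fst h)
  have d16 : ((va, vb) : Fin n × Fin n) ≠ (va, vc) := fun h => hbc (congrArg Prod.snd h)
  have d23 : ((vb, vc) : Fin n × Fin n) ≠ (vc, va) := fun h => hbc (congrArg Prod.fst h)
  have d24 : ((vb, vc) : Fin n × Fin n) ≠ (vb, va) := fun h => hac.symm (congrArg Prod.snd h)
  have d25 : ((vb, vc) : Fin n × Fin n) ≠ (vc, vb) := fun h => hbc (congrArg Prod.fst h)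
  have d26 : ((vb, vc) : Fin n × Fin n) ≠ (va, vc) := fun h => hab.symm (congrArg Prod.fst h)
  have d34 : ((vc, va) : Fin n × Fin n) ≠ (vb, va) := fun h => hbc.symm (congrArg Prod.fst h)
  have d35 : ((vc, va) : Fin n × Fin n) ≠ (vc, vb) := fun h => hab (congrArg Prod.snd h)
  have d36 : ((vc, va) : Fin n × Fin n) ≠ (va, vc) := fun h => hac.symm (congrArg Prod.fst h)
  have d45 : ((vb, va) : Fin n × Fin n) ≠ (vc, vb) := fun h => hbc (congrArg Prod.fst h)
  have d46 : ((vb, va) : Fin n × Fin n) ≠ (va, vc) := fun h => hab.symm (congrArg Prod.fst h)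
  have d56 : ((vc, vb) : Fin n × Fin n) ≠ (va, vc) := fun h => hac.symm (congrArg Prod.fst h)
  rw [card_filter_six _ _ _ _ _ _ _ d12 d13 d14 d15 d16 d23 d24 d25 d26 d34 d35 d36 d45 d46 d56,
    card_filter_six _ _ _ _ _ _ _ d12 d13 d14 d15 d16 d23 d24 d25 d26 d34 d35 d36 d45 d46 d56] at key
  simp only [v1, v2, v3, v4, v5, v6] at key
  convert key using 2


lemma step (κ : ℕ) (E E' : Fin n → Fin n → Bool)
    (hE : Realizes E dp dm) (hE' : Realizes E' dp dm)
    (a b : ZMod (κ + 2) → Fin n) (hw : IsRBWalk E E' κ a b) :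
    (∃ Enew, Swap E Enew ∧ diffC Enew E' < diffC E E') ∨
    (∃ E'new, Swap E' E'new ∧ diffC E E'new < diffC E E') ∨
    (∃ κ' < κ, ∃ a' b', IsRBWalk E E' κ' a' b') ∨
    (∃ Enew, Swap E Enew ∧ diffC Enew E' = diffC E E' ∧
      ∃ κ' < κ, ∃ a' b', IsRBWalk Enew E' κ' a' b') := by
  classical
  have hred : ∀ i, E (a i) (b i) = true := fun i => (hw i).1.1
  have hred' : ∀ i, E' (a i) (b i) = false := fun i => (hw i).1.2
  have hblue : ∀ i, E' (a (i + 1)) (b i) = true := fun i => (hw i).2.1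
  have hblue' : ∀ i, E (a (i + 1)) (b i) = false := fun i => (hw i).2.2
  have cast_succ : ∀ (s : ℕ), ((s + 1 : ℕ) : ZMod (κ + 2)) = (s : ZMod (κ + 2)) + 1 := by
    intro s; push_cast; ring
  -- Case 1 : a repeats
  by_cases hca : ∃ i j : ZMod (κ + 2), i ≠ j ∧ a i = a j
  · obtain ⟨i, j, hij, heq⟩ := hca
    refine Or.inr (Or.inr (Or.inl ?_))
    set d := (j - i).val with hd
    have hcast : ((d : ℕ) : ZMod (κ + 2)) = j - i := zmod_cast_val _
    have hd0 : d ≠ 0 := by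
      intro h0
      apply hij
      have hji : j - i = 0 := by rw [← hcast, h0]; simp
      have := sub_eq_zero.mp hji
      exact this.symm
    have hdlt : d < κ + 2 := ZMod.val_lt _
    have hd1 : d ≠ 1 := by
      intro h0
      have hji : j = i + 1 := by
        have : j - i = 1 := by rw [← hcast, h0]; simp
        rw [← this]; ring
      have hbl := hblue i
      rw [← hji, ← heq, hred' i] at hbl
      exact absurd hbl (by simp)
    obtain ⟨κ', hκ'⟩ : ∃ κ', d = κ' + 2 := ⟨d - 2, by omega⟩
    refine ⟨κ', by omega, ?_⟩
    apply walk_of_segment E E' κ' (fun s => a (i + (s : ZMod (κ + 2))))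
      (fun s => b (i + (s : ZMod (κ + 2))))
    · intro s _; exact ⟨hred _, hred' _⟩
    · intro s _
      rw [cast_succ s, show i + ((s : ZMod (κ + 2)) + 1) = (i + s) + 1 by ring]
      exact ⟨hblue _, hblue' _⟩
    · have e0 : i + ((0 : ℕ) : ZMod (κ + 2)) = i := by norm_num
      have e1 : i + ((κ' + 1 : ℕ) : ZMod (κ + 2)) = j - 1 := by
        have : ((κ' + 1 : ℕ) : ZMod (κ + 2)) = (j - i) - 1 := by
          rw [← hcast, hκ']; push_cast; ring
        rw [this]; ring
      rw [e0, e1]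
      have hb := hblue (j - 1)
      have hb' := hblue' (j - 1)
      rw [sub_add_cancel, ← heq] at hb hb'
      exact ⟨hb, hb'⟩
  -- Case 2 : b repeats
  by_cases hcb : ∃ i j : ZMod (κ + 2), i ≠ j ∧ b i = b j
  · obtain ⟨i, j, hij, heq⟩ := hcb
    refine Or.inr (Or.inr (Or.inl ?_))
    set d := (j - i).val with hd
    have hcast : ((d : ℕ) : ZMod (κ + 2)) = j - i := zmod_cast_val _
    have hd0 : d ≠ 0 := by
      intro h0
      apply hij
      have hji : j - i = 0 := by rw [← hcast, h0]; simp
      exact (sub_eq_zero.mp hji).symm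
    have hdlt : d < κ + 2 := ZMod.val_lt _
    have hd1 : d ≠ 1 := by
      intro h0
      have hji : j = i + 1 := by
        have : j - i = 1 := by rw [← hcast, h0]; simp
        rw [← this]; ring
      have hbl := hblue' i
      rw [← hji] at hbl
      -- E (a j) (b i) = false, but b i = b j and E (a j) (b j) = true
      rw [heq, hred j] at hbl
      exact absurd hbl (by simp)
    obtain ⟨κ', hκ'⟩ : ∃ κ', d = κ' + 2 := ⟨d - 2, by omega⟩
    refine ⟨κ', by omega, ?_⟩
    apply walk_of_segment E E' κ' (fun s => a (i + 1 + (s : ZMod (κ + 2))))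
      (fun s => b (i + 1 + (s : ZMod (κ + 2))))
    · intro s _; exact ⟨hred _, hred' _⟩
    · intro s _
      rw [cast_succ s, show i + 1 + ((s : ZMod (κ + 2)) + 1) = (i + 1 + s) + 1 by ring]
      exact ⟨hblue _, hblue' _⟩
    · have e0 : i + 1 + ((0 : ℕ) : ZMod (κ + 2)) = i + 1 := by norm_num
      have e1 : i + 1 + ((κ' + 1 : ℕ) : ZMod (κ + 2)) = j := by
        have : ((κ' + 1 : ℕ) : ZMod (κ + 2)) = (j - i) - 1 := by
          rw [← hcast, hκ']; push_cast; ring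
        rw [this]; ring
      rw [e0, e1, ← heq]
      exact ⟨hblue i, hblue' i⟩
  -- Case 3 : non-neutral chord
  by_cases hch : ∃ i j : ZMod (κ + 2), j ≠ i ∧ j ≠ i - 1 ∧ E (a i) (b j) ≠ E' (a i) (b j)
  · obtain ⟨i, j, hji, hji1, hne⟩ := hch
    refine Or.inr (Or.inr (Or.inl ?_))
    cases hEv : E (a i) (b j) with
    | true =>
      -- red chord, walk of length (i - j).val
      have hE'v : E' (a i) (b j) = false := by
        cases h : E' (a i) (b j)
        · rfl
        · rw [hEv, h] at hne; exact absurd rfl hne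
      set d := (i - j).val with hd
      have hcast : ((d : ℕ) : ZMod (κ + 2)) = i - j := zmod_cast_val _
      have hd0 : d ≠ 0 := by
        intro h0
        apply hji
        have hji' : i - j = 0 := by rw [← hcast, h0]; simp
        exact (sub_eq_zero.mp hji').symm
      have hdlt : d < κ + 2 := ZMod.val_lt _
      have hd1 : d ≠ 1 := by
        intro h0
        apply hji1
        have : i - j = 1 := by rw [← hcast, h0]; simp
        have : j = i - 1 := by rw [← this]; ring
        exact this
      obtain ⟨κ', hκ'⟩ : ∃ κ', d = κ' + 2 := ⟨d - 2, by omega⟩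
      refine ⟨κ', by omega, ?_⟩
      apply walk_of_segment E E' κ'
        (fun s => if s = 0 then a i else a (j + (s : ZMod (κ + 2))))
        (fun s => b (j + (s : ZMod (κ + 2))))
      · intro s _
        by_cases hs : s = 0
        · subst hs
          simp only [if_pos rfl]
          rw [show j + ((0 : ℕ) : ZMod (κ + 2)) = j by norm_num]
          exact ⟨hEv, hE'v⟩
        · simp only [if_neg hs]
          exact ⟨hred _, hred' _⟩
      · intro s _
        simp only [if_neg (Nat.succ_ne_zero s)]
        rw [cast_succ s, show j + ((s : ZMod (κ + 2)) + 1) = (j + s) + 1 by ring]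
        exact ⟨hblue _, hblue' _⟩
      · simp only [if_pos rfl]
        have e1 : j + ((κ' + 1 : ℕ) : ZMod (κ + 2)) = i - 1 := by
          have : ((κ' + 1 : ℕ) : ZMod (κ + 2)) = (i - j) - 1 := by
            rw [← hcast, hκ']; push_cast; ring
          rw [this]; ring
        rw [e1]
        have hb := hblue (i - 1)
        have hb' := hblue' (i - 1)
        rw [sub_add_cancel] at hb hb'
        exact ⟨hb, hb'⟩
    | false =>
      -- blue chord, walk of length (j - i).val + 1
      have hE'v : E' (a i) (b j) = true := by
        cases h : E' (a i) (b j)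
        · rw [hEv, h] at hne; exact absurd rfl hne
        · rfl
      set d := (j - i).val with hd
      have hcast : ((d : ℕ) : ZMod (κ + 2)) = j - i := zmod_cast_val _
      have hd0 : d ≠ 0 := by
        intro h0
        apply hji
        have hji' : j - i = 0 := by rw [← hcast, h0]; simp
        exact sub_eq_zero.mp hji'
      have hdlt : d < κ + 2 := ZMod.val_lt _
      have hdk : d ≠ κ + 1 := by
        intro h0
        apply hji1
        have : j - i = ((κ + 1 : ℕ) : ZMod (κ + 2)) := by rw [← hcast, h0]
        have h2 : ((κ + 1 : ℕ) : ZMod (κ + 2)) = -1 := by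
          have h3 : ((κ + 2 : ℕ) : ZMod (κ + 2)) = 0 := ZMod.natCast_self _
          push_cast at h3 ⊢
          linear_combination h3
        rw [h2] at this
        linear_combination this
      obtain ⟨κ', hκ'⟩ : ∃ κ', d + 1 = κ' + 2 := ⟨d - 1, by omega⟩
      refine ⟨κ', by omega, ?_⟩
      apply walk_of_segment E E' κ' (fun s => a (i + (s : ZMod (κ + 2))))
        (fun s => b (i + (s : ZMod (κ + 2))))
      · intro s _; exact ⟨hred _, hred' _⟩
      · intro s _
        rw [cast_succ s, show i + ((s : ZMod (κ + 2)) + 1) = (i + s) + 1 by ring]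
        exact ⟨hblue _, hblue' _⟩
      · have e1 : i + ((κ' + 1 : ℕ) : ZMod (κ + 2)) = j := by
          have : ((κ' + 1 : ℕ) : ZMod (κ + 2)) = (j - i) := by
            rw [← hcast]
            have : κ' + 1 = d := by omega
            rw [this]
          rw [this]; ring
        have e0 : i + ((0 : ℕ) : ZMod (κ + 2)) = i := by norm_num
        rw [e0, e1]
        exact ⟨hE'v, hEv⟩
  push_neg at hca hcb hch
  have ha_inj : ∀ i j : ZMod (κ + 2), a i = a j → i = j := by
    intro i j h; by_contra hne; exact hca i j hne h
  have hb_inj : ∀ i j : ZMod (κ + 2), b i = b j → i = j := by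
    intro i j h; by_contra hne; exact hcb i j hne h
  have hnlr : ∀ i, a i ≠ b i := by
    intro i h
    have hri := hred i
    rw [h, hE.1] at hri
    exact absurd hri (by simp)
  have hnlb : ∀ i, a (i + 1) ≠ b i := by
    intro i h
    have hbi := hblue i
    rw [h, hE'.1] at hbi
    exact absurd hbi (by simp)
  have hcast_ne : ∀ c : ℕ, 1 ≤ c → c < κ + 2 → ((c : ℕ) : ZMod (κ + 2)) ≠ 0 := by
    intro c h1 h2 h
    have h3 := congrArg ZMod.val h
    rw [ZMod.val_natCast, Nat.mod_eq_of_lt h2, ZMod.val_zero] at h3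
    omega
  rcases Nat.eq_zero_or_pos κ with hκ0 | hκpos
  · -- κ = 0 : length-2 walk, single 2-swap removes everything
    subst hκ0
    left
    have h01 : (0 : ZMod 2) ≠ 1 := by decide
    have ha01 : a 0 ≠ a 1 := fun h => h01 (ha_inj _ _ h)
    have hb01 : b 0 ≠ b 1 := fun h => h01 (hb_inj _ _ h)
    have e10 : (1 : ZMod 2) + 1 = 0 := by decide
    have e01 : (0 : ZMod 2) + 1 = 1 := by decide
    have hb1 : E' (a 0) (b 1) = true := by have := hblue 1; rwa [e10] at this
    have hb1' : E (a 0) (b 1) = false := by have := hblue' 1; rwa [e10] at this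
    have hb0 : E' (a 1) (b 0) = true := by have := hblue 0; rwa [e01] at this
    have hb0' : E (a 1) (b 0) = false := by have := hblue' 0; rwa [e01] at this
    have hnl01 : a 0 ≠ b 1 := by have := hnlb 1; rwa [e10] at this
    have hnl10 : a 1 ≠ b 0 := by have := hnlb 0; rwa [e01] at this
    refine ⟨twoSwapped E (a 0) (b 0) (a 1) (b 1),
      Or.inl (twoSwapped_isSwap E _ _ _ _ (hnlr 0) (hnlr 1) hnl01 hnl10
        (hred 0) (hred 1) hb1' hb0'), ?_⟩
    have key := twoSwapped_diff E E' (a 0) (b 0) (a 1) (b 1) ha01 hb01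
    rw [hred 0, hred 1, hb1', hb0', hred' 0, hred' 1, hb1, hb0] at key
    norm_num at key
    omega
  -- κ ≥ 1, i.e. walk length at least 3
  have hz1 : (1 : ZMod (κ + 2)) ≠ 0 := by
    have := hcast_ne 1 (by omega) (by omega); simpa using this
  have hz2 : (2 : ZMod (κ + 2)) ≠ 0 := by
    have := hcast_ne 2 (by omega) (by omega); simpa using this
  by_cases hloops : ∀ m : ZMod (κ + 2), a m = b (m + 1)
  · -- all chords are loops
    have hba : ∀ j : ZMod (κ + 2), b j = a (j - 1) := by
      intro j
      have := hloops (j - 1)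
      rw [sub_add_cancel] at this
      exact this.symm
    by_cases hκ1 : κ = 1
    · -- length-3 walk : triangle reversal
      subst hκ1
      left
      have hb0 : b 0 = a 2 := by have := hba 0; rwa [show (0 : ZMod 3) - 1 = 2 by decide] at this
      have hb1 : b 1 = a 0 := by have := hba 1; rwa [show (1 : ZMod 3) - 1 = 0 by decide] at this
      have hb2 : b 2 = a 1 := by have := hba 2; rwa [show (2 : ZMod 3) - 1 = 1 by decide] at this
      have d02 : a 0 ≠ a 2 := fun h => (by decide : (0 : ZMod 3) ≠ 2) (ha_inj _ _ h)
      have d21 : a 2 ≠ a 1 := fun h => (by decide : (2 : ZMod 3) ≠ 1) (ha_inj _ _ h)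
      have d01 : a 0 ≠ a 1 := fun h => (by decide : (0 : ZMod 3) ≠ 1) (ha_inj _ _ h)
      -- edge values
      have r1 : E (a 0) (a 2) = true := by have := hred 0; rwa [hb0] at this
      have r1' : E' (a 0) (a 2) = false := by have := hred' 0; rwa [hb0] at this
      have r2 : E (a 2) (a 1) = true := by have := hred 2; rwa [hb2] at this
      have r2' : E' (a 2) (a 1) = false := by have := hred' 2; rwa [hb2] at this
      have r3 : E (a 1) (a 0) = true := by have := hred 1; rwa [hb1] at this
      have r3' : E' (a 1) (a 0) = false := by have := hred' 1; rwa [hb1] at this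
      have s1 : E (a 2) (a 0) = false := by
        have := hblue' 1; rwa [show (1 : ZMod 3) + 1 = 2 by decide, hb1] at this
      have s1' : E' (a 2) (a 0) = true := by
        have := hblue 1; rwa [show (1 : ZMod 3) + 1 = 2 by decide, hb1] at this
      have s2 : E (a 1) (a 2) = false := by
        have := hblue' 0; rwa [show (0 : ZMod 3) + 1 = 1 by decide, hb0] at this
      have s2' : E' (a 1) (a 2) = true := by
        have := hblue 0; rwa [show (0 : ZMod 3) + 1 = 1 by decide, hb0] at this
      have s3 : E (a 0) (a 1) = false := by
        have := hblue' 2; rwa [show (2 : ZMod 3) + 1 = 0 by decide, hb2] at this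
      have s3' : E' (a 0) (a 1) = true := by
        have := hblue 2; rwa [show (2 : ZMod 3) + 1 = 0 by decide, hb2] at this
      refine ⟨threeSwapped E (a 0) (a 2) (a 1),
        Or.inr (threeSwapped_isSwap E _ _ _ d02 d21 d01 r1 r2 r3 s1 s2 s3), ?_⟩
      have key := threeSwapped_diff E E' (a 0) (a 2) (a 1) d02 d21 d01
      rw [r1, r2, r3, s1, s2, s3, r1', r2', r3', s1', s2', s3'] at key
      norm_num at key
      omega
    · -- κ ≥ 2 : length at least 4
      have hκ2 : 2 ≤ κ := by omega
      have hz3 : (3 : ZMod (κ + 2)) ≠ 0 := by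
        have := hcast_ne 3 (by omega) (by omega); simpa using this
      by_cases hT1 : ∃ m : ZMod (κ + 2), E (a (m + 1)) (b (m - 1)) = true
      · -- reducing 2-swap using a present skip edge
        obtain ⟨m, hm⟩ := hT1
        left
        have hnl2 : a (m + 1) ≠ b (m - 1) := by
          intro h
          rw [h, hE.1] at hm
          exact absurd hm (by simp)
        have hbm1 : E (a m) (b (m - 1)) = false := by
          have := hblue' (m - 1); rwa [sub_add_cancel] at this
        have hbm1' : E' (a m) (b (m - 1)) = true := by
          have := hblue (m - 1); rwa [sub_add_cancel] at this
        have hnlm1 : a m ≠ b (m - 1) := by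
          have := hnlb (m - 1); rwa [sub_add_cancel] at this
        have hrow : a m ≠ a (m + 1) := by
          intro h
          have := ha_inj _ _ h
          exact hz1 (by linear_combination - this)
        have hcol : b m ≠ b (m - 1) := by
          intro h
          have := hb_inj _ _ h
          exact hz1 (by linear_combination this)
        -- (m+1, m-1) is a neutral position
        have hneut : E (a (m + 1)) (b (m - 1)) = E' (a (m + 1)) (b (m - 1)) :=
          hch (m + 1) (m - 1) (fun h => hz2 (by linear_combination - h))
            (fun h => hz1 (by linear_combination - h))
        have hm' : E' (a (m + 1)) (b (m - 1)) = true := hneut.symm.trans hm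
        refine ⟨twoSwapped E (a m) (b m) (a (m + 1)) (b (m - 1)),
          Or.inl (twoSwapped_isSwap E _ _ _ _ (hnlr m) hnl2 hnlm1 (hnlb m)
            (hred m) hm hbm1 (hblue' m)), ?_⟩
        have key := twoSwapped_diff E E' (a m) (b m) (a (m + 1)) (b (m - 1)) hrow hcol
        rw [hred m, hm, hbm1, hblue' m, hred' m, hm', hbm1', hblue m] at key
        norm_num at key
        omega
      push_neg at hT1
      have hT1' : ∀ m : ZMod (κ + 2), E (a (m + 1)) (b (m - 1)) = false := by
        intro m
        cases h : E (a (m + 1)) (b (m - 1))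
        · rfl
        · exact absurd h (hT1 m)
      by_cases hT2 : ∃ i p : ZMod (κ + 2), p ≠ i - 1 ∧ p ≠ i ∧ p ≠ i + 1 ∧
          E (a p) (b (i - 1)) = true ∧ E (a p) (b i) = false
      · -- plateau 2-swap creating a strictly shorter walk
        obtain ⟨i, p, hpi1, hpi, hpi2, hpres, habs⟩ := hT2
        refine Or.inr (Or.inr (Or.inr ?_))
        have hnl2 : a p ≠ b (i - 1) := by
          intro h
          rw [h, hE.1] at hpres
          exact absurd hpres (by simp)
        have hnli1 : a i ≠ b (i - 1) := by
          have := hnlb (i - 1); rwa [sub_add_cancel] at this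
        have hnl4 : a p ≠ b i := by
          intro h
          rw [hba i] at h
          exact hpi1 (ha_inj _ _ h)
        have hbi1 : E (a i) (b (i - 1)) = false := by
          have := hblue' (i - 1); rwa [sub_add_cancel] at this
        have hbi1' : E' (a i) (b (i - 1)) = true := by
          have := hblue (i - 1); rwa [sub_add_cancel] at this
        have hrow : a i ≠ a p := fun h => hpi (ha_inj _ _ h).symm
        have hcol : b i ≠ b (i - 1) := by
          intro h
          have := hb_inj _ _ h
          exact hz1 (by linear_combination this)
        -- neutral values
        have hneut1 : E (a p) (b (i - 1)) = E' (a p) (b (i - 1)) :=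
          hch p (i - 1) (fun h => hpi1 h.symm)
            (fun h => hpi (by linear_combination - h))
        have hneut2 : E (a p) (b i) = E' (a p) (b i) :=
          hch p i (fun h => hpi h.symm) (fun h => hpi2 (by linear_combination - h))
        have hpres' : E' (a p) (b (i - 1)) = true := hneut1.symm.trans hpres
        have habs' : E' (a p) (b i) = false := hneut2.symm.trans habs
        set Enew := twoSwapped E (a i) (b i) (a p) (b (i - 1)) with hEnewdef
        have hswap : TwoSwap E Enew :=
          twoSwapped_isSwap E _ _ _ _ (hnlr i) hnl2 hnli1 hnl4
            (hred i) hpres hbi1 habs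
        -- difference count is unchanged
        have key := twoSwapped_diff E E' (a i) (b i) (a p) (b (i - 1)) hrow hcol
        rw [hred i, hpres, hbi1, habs, hred' i, hpres', hbi1', habs'] at key
        norm_num at key
        rw [← hEnewdef] at key
        -- the new shorter walk
        set d := (p - i).val with hd
        have hcast : ((d : ℕ) : ZMod (κ + 2)) = p - i := zmod_cast_val _
        have hd0 : d ≠ 0 := by
          intro h0
          apply hpi
          have : p - i = 0 := by rw [← hcast, h0]; simp
          exact (sub_eq_zero.mp this)
        have hdlt : d < κ + 2 := ZMod.val_lt _
        have hd1 : d ≠ 1 := by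
          intro h0
          apply hpi2
          have : p - i = 1 := by rw [← hcast, h0]; simp
          linear_combination this
        obtain ⟨κ'', hκ''⟩ : ∃ κ'', d = κ'' + 2 := ⟨d - 2, by omega⟩
        have hsd : ∀ s : ℕ, s < d → i + (s : ZMod (κ + 2)) ≠ p := by
          intro s hs h
          have h2 : ((s : ℕ) : ZMod (κ + 2)) = p - i := by linear_combination h
          have h3 := congrArg ZMod.val h2
          rw [ZMod.val_natCast, Nat.mod_eq_of_lt (by omega)] at h3
          omega
        have hs0 : ∀ s : ℕ, 1 ≤ s → s < κ + 2 → i + (s : ZMod (κ + 2)) ≠ i := by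
          intro s h1 h2 h
          have h3 : ((s : ℕ) : ZMod (κ + 2)) = 0 := by linear_combination h
          exact hcast_ne s h1 h2 h3
        -- rows distinct from a i and a p stay unchanged
        have hother : ∀ x y : Fin n, x ≠ a i → x ≠ a p → Enew x y = E x y := by
          intro x y h1 h2
          exact twoSwapped_other E _ _ _ _ x y (fun hh => h1 hh.1) (fun hh => h2 hh.1)
            (fun hh => h1 hh.1) (fun hh => h2 hh.1)
        have hotherc : ∀ y : Fin n, y ≠ b i → y ≠ b (i - 1) → Enew (a p) y = E (a p) y := by
          intro y h1 h2
          exact twoSwapped_other E _ _ _ _ _ y (fun hh => hrow hh.1.symm)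
            (fun hh => h2 hh.2) (fun hh => hrow hh.1.symm) (fun hh => h1 hh.2)
        refine ⟨Enew, Or.inl hswap, by omega, κ'', by omega, ?_⟩
        apply walk_of_segment Enew E' κ''
          (fun s => if s = 0 then a p else a (i + (s : ZMod (κ + 2))))
          (fun s => b (i + (s : ZMod (κ + 2))))
        · intro s hs
          rw [← hκ''] at hs
          by_cases h0 : s = 0
          · subst h0
            simp only [if_pos rfl]
            rw [show i + ((0 : ℕ) : ZMod (κ + 2)) = i by norm_num]
            constructor
            · exact twoSwapped_val21 E _ _ _ _ hrow hcol
            · exact habs'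
          · simp only [if_neg h0]
            have hrowfact : a (i + (s : ZMod (κ + 2))) ≠ a i := fun h =>
              hs0 s (by omega) (by omega) (ha_inj _ _ h)
            have hrowfact2 : a (i + (s : ZMod (κ + 2))) ≠ a p := fun h =>
              hsd s (by omega) (ha_inj _ _ h)
            rw [hother _ _ hrowfact hrowfact2]
            exact ⟨hred _, hred' _⟩
        · intro s hs
          rw [← hκ''] at hs
          simp only [if_neg (Nat.succ_ne_zero s)]
          rw [cast_succ s, show i + ((s : ZMod (κ + 2)) + 1) = (i + s) + 1 by ring]
          have hrowfact : a ((i + (s : ZMod (κ + 2))) + 1) ≠ a i := by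
            rw [show (i + (s : ZMod (κ + 2))) + 1 = i + ((s + 1 : ℕ) : ZMod (κ + 2)) by
              rw [cast_succ s]; ring]
            exact fun h => hs0 (s + 1) (by omega) (by omega) (ha_inj _ _ h)
          have hrowfact2 : a ((i + (s : ZMod (κ + 2))) + 1) ≠ a p := by
            rw [show (i + (s : ZMod (κ + 2))) + 1 = i + ((s + 1 : ℕ) : ZMod (κ + 2)) by
              rw [cast_succ s]; ring]
            exact fun h => hsd (s + 1) (by omega) (ha_inj _ _ h)
          rw [hother _ _ hrowfact hrowfact2]
          exact ⟨hblue _, hblue' _⟩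
        · simp only [if_pos rfl]
          have e1 : i + ((κ'' + 1 : ℕ) : ZMod (κ + 2)) = p - 1 := by
            have h2 : ((κ'' + 1 : ℕ) : ZMod (κ + 2)) = (p - i) - 1 := by
              rw [← hcast, hκ'']; push_cast; ring
            rw [h2]; ring
          rw [e1]
          have hcol1 : b (p - 1) ≠ b i := by
            intro h
            have := hb_inj _ _ h
            exact hpi2 (by linear_combination this)
          have hcol2 : b (p - 1) ≠ b (i - 1) := by
            intro h
            have := hb_inj _ _ h
            exact hpi (by linear_combination this)
          have hb := hblue (p - 1)
          have hb' := hblue' (p - 1)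
          rw [sub_add_cancel] at hb hb'
          constructor
          · exact hb
          · show Enew (a p) (b (p - 1)) = false
            rw [hotherc _ hcol1 hcol2]
            exact hb'
      · -- final plateau move : all rows contain only the red edge
        push_neg at hT2
        have hT2' : ∀ i p : ZMod (κ + 2), p ≠ i - 1 → p ≠ i → p ≠ i + 1 →
            E (a p) (b (i - 1)) = true → E (a p) (b i) = true := by
          intro i p h1 h2 h3 h4
          have := hT2 i p h1 h2 h3 h4
          cases h : E (a p) (b i)
          · exact absurd h this
          · rfl
        -- every entry `E (a x) (b (x + s + 1))`, 1 ≤ s ≤ κ - 1, vanishes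
        have cl : ∀ (x : ZMod (κ + 2)) (s : ℕ), 1 ≤ s → s ≤ κ - 1 →
            E (a x) (b (x + (s : ZMod (κ + 2)) + 1)) = false := by
          intro x s hs1 hs2
          by_contra hcon
          have hcon' : E (a x) (b (x + (s : ZMod (κ + 2)) + 1)) = true := by
            cases h : E (a x) (b (x + (s : ZMod (κ + 2)) + 1))
            · exact absurd h hcon
            · rfl
          have asc : ∀ t : ℕ, s + t ≤ κ - 1 →
              E (a x) (b (x + ((s + t : ℕ) : ZMod (κ + 2)) + 1)) = true := by
            intro t
            induction t with
            | zero =>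
              intro _
              simpa using hcon'
            | succ t ih =>
              intro ht
              have hprev := ih (by omega)
              have happ := hT2' (x + ((s + t : ℕ) : ZMod (κ + 2)) + 2) x
                ?_ ?_ ?_ ?_
              · rw [show x + ((s + (t + 1) : ℕ) : ZMod (κ + 2)) + 1
                    = x + ((s + t : ℕ) : ZMod (κ + 2)) + 2 by push_cast; ring]
                exact happ
              · intro h
                have h2 : ((s + t + 1 : ℕ) : ZMod (κ + 2)) = 0 := by
                  push_cast at h ⊢; linear_combination -h
                exact hcast_ne (s + t + 1) (by omega) (by omega) h2
              · intro h
                have h2 : ((s + t + 2 : ℕ) : ZMod (κ + 2)) = 0 := by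
                  push_cast at h ⊢; linear_combination -h
                exact hcast_ne (s + t + 2) (by omega) (by omega) h2
              · intro h
                have h2 : ((s + t + 3 : ℕ) : ZMod (κ + 2)) = 0 := by
                  push_cast at h ⊢; linear_combination -h
                exact hcast_ne (s + t + 3) (by omega) (by omega) h2
              · rw [show (x + ((s + t : ℕ) : ZMod (κ + 2)) + 2) - 1
                    = x + ((s + t : ℕ) : ZMod (κ + 2)) + 1 by ring]
                exact hprev
          have top := asc (κ - 1 - s) (by omega)
          rw [show s + (κ - 1 - s) = κ - 1 by omega] at top
          have hcastk : ((κ - 1 : ℕ) : ZMod (κ + 2)) = -3 := by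
            have hn : ((κ - 1 + 3 : ℕ) : ZMod (κ + 2)) = 0 := by
              rw [show κ - 1 + 3 = κ + 2 by omega]
              exact ZMod.natCast_self _
            push_cast at hn
            linear_combination hn
          rw [hcastk] at top
          have hfin := hT1' (x - 1)
          rw [sub_add_cancel, show (x - 1) - 1 = x + -3 + 1 by ring] at hfin
          rw [hfin] at top
          exact absurd top (by simp)
        -- the plateau 2-swap on the two reds R₀ and R₂
        refine Or.inr (Or.inr (Or.inr ?_))
        have hz02 : (0 : ZMod (κ + 2)) ≠ 2 := fun h => hz2 (by linear_combination -h)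
        have hz01 : (0 : ZMod (κ + 2)) ≠ 1 := fun h => hz1 (by linear_combination -h)
        have hz12 : (1 : ZMod (κ + 2)) ≠ 2 := fun h => hz1 (by linear_combination -h)
        have hz2m1 : (2 : ZMod (κ + 2)) ≠ -1 := fun h => hz3 (by linear_combination h)
        have hb2 : b 2 = a 1 := by
          have := hba 2; rwa [show (2 : ZMod (κ + 2)) - 1 = 1 by ring] at this
        have hb0 : b 0 = a (-1) := by
          have := hba 0; rwa [show (0 : ZMod (κ + 2)) - 1 = -1 by ring] at this
        have habs02 : E (a 0) (b 2) = false := by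
          have := cl 0 1 (by omega) (by omega)
          rwa [show (0 : ZMod (κ + 2)) + ((1 : ℕ) : ZMod (κ + 2)) + 1 = 2 by push_cast; ring]
            at this
        have habs20 : E (a 2) (b 0) = false := by
          have := cl 2 (κ - 1) (by omega) (by omega)
          have hcastk : ((κ - 1 : ℕ) : ZMod (κ + 2)) = -3 := by
            have hn : ((κ - 1 + 3 : ℕ) : ZMod (κ + 2)) = 0 := by
              rw [show κ - 1 + 3 = κ + 2 by omega]
              exact ZMod.natCast_self _
            push_cast at hn
            linear_combination hn
          rwa [hcastk, show (2 : ZMod (κ + 2)) + -3 + 1 = 0 by ring] at this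
        have hrow : a 0 ≠ a 2 := fun h => hz02 (ha_inj _ _ h)
        have hcol : b 0 ≠ b 2 := fun h => hz02 (hb_inj _ _ h)
        have hneut02 : E (a 0) (b 2) = E' (a 0) (b 2) :=
          hch 0 2 hz02.symm (fun h => hz3 (by linear_combination h))
        have hneut20 : E (a 2) (b 0) = E' (a 2) (b 0) :=
          hch 2 0 hz02 (fun h => hz1 (by linear_combination -h))
        have habs02' : E' (a 0) (b 2) = false := hneut02.symm.trans habs02
        have habs20' : E' (a 2) (b 0) = false := hneut20.symm.trans habs20
        have hnl02 : a 0 ≠ b 2 := by rw [hb2]; exact fun h => hz01 (ha_inj _ _ h)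
        have hnl20 : a 2 ≠ b 0 := by rw [hb0]; exact fun h => hz2m1 (ha_inj _ _ h)
        set Enew := twoSwapped E (a 0) (b 0) (a 2) (b 2) with hEnewdef
        have hswap : TwoSwap E Enew :=
          twoSwapped_isSwap E _ _ _ _ (hnlr 0) (hnlr 2) hnl02 hnl20
            (hred 0) (hred 2) habs02 habs20
        have key := twoSwapped_diff E E' (a 0) (b 0) (a 2) (b 2) hrow hcol
        rw [hred 0, hred 2, habs02, habs20, hred' 0, hred' 2, habs02', habs20'] at key
        norm_num at key
        rw [← hEnewdef] at key
        refine ⟨Enew, Or.inl hswap, by omega, 0, by omega, ?_⟩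
        -- the length-2 walk : red (a2,b0),(a1,b1); blue (a1,b0),(a2,b1)
        refine ⟨fun i => if i = 0 then a 2 else a 1, fun i => if i = 0 then b 0 else b 1, ?_⟩
        have hval20 : Enew (a 2) (b 0) = true := twoSwapped_val21 E _ _ _ _ hrow hcol
        have ha12 : a 1 ≠ a 0 := fun h => hz01 (ha_inj _ _ h).symm
        have ha12' : a 1 ≠ a 2 := fun h => hz12 (ha_inj _ _ h)
        have hb10 : b 1 ≠ b 0 := fun h => hz01 (hb_inj _ _ h).symm
        have hb12 : b 1 ≠ b 2 := fun h => hz12 (hb_inj _ _ h)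
        have hval11 : Enew (a 1) (b 1) = E (a 1) (b 1) :=
          twoSwapped_other E _ _ _ _ _ _ (fun hh => ha12 hh.1) (fun hh => ha12' hh.1)
            (fun hh => ha12 hh.1) (fun hh => ha12' hh.1)
        have hval10 : Enew (a 1) (b 0) = E (a 1) (b 0) :=
          twoSwapped_other E _ _ _ _ _ _ (fun hh => ha12 hh.1) (fun hh => ha12' hh.1)
            (fun hh => ha12 hh.1) (fun hh => ha12' hh.1)
        have hval21' : Enew (a 2) (b 1) = E (a 2) (b 1) :=
          twoSwapped_other E _ _ _ _ _ _ (fun hh => hrow hh.1.symm) (fun hh => hb12 hh.2)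
            (fun hh => hrow hh.1.symm) (fun hh => hb10 hh.2)
        have hblue10 : E' (a 1) (b 0) = true := by
          have := hblue 0; rwa [show (0 : ZMod (κ + 2)) + 1 = 1 by ring] at this
        have hblue10' : E (a 1) (b 0) = false := by
          have := hblue' 0; rwa [show (0 : ZMod (κ + 2)) + 1 = 1 by ring] at this
        have hblue21 : E' (a 2) (b 1) = true := by
          have := hblue 1; rwa [show (1 : ZMod (κ + 2)) + 1 = 2 by ring] at this
        have hblue21' : E (a 2) (b 1) = false := by
          have := hblue' 1; rwa [show (1 : ZMod (κ + 2)) + 1 = 2 by ring] at this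
        have hz2cases : ∀ i : ZMod 2, i = 0 ∨ i = 1 := by decide
        intro i
        rcases hz2cases i with rfl | rfl
        · constructor
          · constructor
            · simpa using hval20
            · simpa using habs20'
          · rw [show (0 : ZMod 2) + 1 = 1 by decide]
            simp only [if_neg (by decide : (1 : ZMod 2) ≠ 0), if_pos rfl]
            constructor
            · exact hblue10
            · show Enew (a 1) (b 0) = false
              rw [hval10]; exact hblue10'
        · constructor
          · constructor
            · simp only [if_neg (by decide : (1 : ZMod 2) ≠ 0)]
              rw [hval11]; exact hred 1
            · simp only [if_neg (by decide : (1 : ZMod 2) ≠ 0)]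
              exact hred' 1
          · rw [show (1 : ZMod 2) + 1 = 0 by decide]
            simp only [if_pos rfl, if_neg (by decide : (1 : ZMod 2) ≠ 0)]
            constructor
            · exact hblue21
            · show Enew (a 2) (b 1) = false
              rw [hval21']; exact hblue21'
  · -- some chord is not a loop : a reducing 2-swap on one side or the other
    push_neg at hloops
    obtain ⟨m, hm⟩ := hloops
    have hneut : E (a m) (b (m + 1)) = E' (a m) (b (m + 1)) :=
      hch m (m + 1) (fun h => hz1 (by linear_combination h))
        (fun h => hz2 (by linear_combination h))
    have hrow : a m ≠ a (m + 1) := by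
      intro h
      have := ha_inj _ _ h
      exact hz1 (by linear_combination - this)
    have hcol : b m ≠ b (m + 1) := by
      intro h
      have := hb_inj _ _ h
      exact hz1 (by linear_combination - this)
    cases hv : E (a m) (b (m + 1)) with
    | false =>
      left
      have hv' : E' (a m) (b (m + 1)) = false := hneut.symm.trans hv
      refine ⟨twoSwapped E (a m) (b m) (a (m + 1)) (b (m + 1)),
        Or.inl (twoSwapped_isSwap E _ _ _ _ (hnlr m) (hnlr (m + 1)) hm (hnlb m)
          (hred m) (hred (m + 1)) hv (hblue' m)), ?_⟩
      have key := twoSwapped_diff E E' (a m) (b m) (a (m + 1)) (b (m + 1)) hrow hcol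
      rw [hred m, hred (m + 1), hv, hblue' m, hred' m, hred' (m + 1), hv', hblue m] at key
      norm_num at key
      omega
    | true =>
      right; left
      have hv' : E' (a m) (b (m + 1)) = true := hneut.symm.trans hv
      refine ⟨twoSwapped E' (a (m + 1)) (b m) (a m) (b (m + 1)),
        Or.inl (twoSwapped_isSwap E' _ _ _ _ (hnlb m) hm (hnlr (m + 1)) (hnlr m)
          (hblue m) hv' (hred' (m + 1)) (hred' m)), ?_⟩
      rw [diffC_comm E (twoSwapped E' (a (m + 1)) (b m) (a m) (b (m + 1))),
        diffC_comm E E']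
      have key := twoSwapped_diff E' E (a (m + 1)) (b m) (a m) (b (m + 1))
        hrow.symm hcol
      rw [hblue m, hv', hred' (m + 1), hred' m, hblue' m, hv, hred (m + 1), hred m] at key
      norm_num at key
      omega



lemma reach_of_walk (D : ℕ) : ∀ κ (E E' : Fin n → Fin n → Bool),
    Realizes E dp dm → Realizes E' dp dm → diffC E E' = D →
    (∃ a b, IsRBWalk E E' κ a b) → Reach dp dm E E' := by
  induction D using Nat.strong_induction_on with
  | _ D ihD =>
    intro κ
    induction κ using Nat.strong_induction_on with
    | _ κ ihκ =>
      intro E E' hE hE' hD hw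
      obtain ⟨a, b, hwab⟩ := hw
      rcases step κ E E' hE hE' a b hwab with
        ⟨Enew, hsw, hlt⟩ | ⟨E'new, hsw, hlt⟩ | ⟨κ', hκ', a', b', hw'⟩ |
        ⟨Enew, hsw, heq, κ', hκ', a', b', hw'⟩
      · have hREnew : Realizes Enew dp dm := realizes_swap hsw hE
        by_cases hz : diffC Enew E' = 0
        · have : Enew = E' := diffC_eq_zero hz
          rw [← this]
          exact reach_single hE hREnew hsw
        · obtain ⟨κ'', a'', b'', hw''⟩ := exists_walk hREnew hE' hz
          have hrest := ihD (diffC Enew E') (by omega) κ'' Enew E' hREnew hE' rfl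
            ⟨a'', b'', hw''⟩
          exact reach_trans (reach_single hE hREnew hsw) hrest
      · have hRE'new : Realizes E'new dp dm := realizes_swap hsw hE'
        have hback : Reach dp dm E'new E' := reach_single hRE'new hE' (swap_symm hsw)
        by_cases hz : diffC E E'new = 0
        · have : E = E'new := diffC_eq_zero hz
          rw [this]
          exact hback
        · obtain ⟨κ'', a'', b'', hw''⟩ := exists_walk hE hRE'new hz
          have hrest := ihD (diffC E E'new) (by omega) κ'' E E'new hE hRE'new rfl
            ⟨a'', b'', hw''⟩
          exact reach_trans hrest hback
      · exact ihκ κ' hκ' E E' hE hE' hD ⟨a', b', hw'⟩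
      · have hREnew : Realizes Enew dp dm := realizes_swap hsw hE
        have hrest := ihκ κ' hκ' Enew E' hREnew hE' (heq.trans hD) ⟨a', b', hw'⟩
        exact reach_trans (reach_single hE hREnew hsw) hrest

lemma reach_main {E E' : Fin n → Fin n → Bool} (hE : Realizes E dp dm)
    (hE' : Realizes E' dp dm) : Reach dp dm E E' := by
  by_cases hz : diffC E E' = 0
  · rw [diffC_eq_zero hz]
    exact reach_refl hE'
  · obtain ⟨κ, a, b, hw⟩ := exists_walk hE hE' hz
    exact reach_of_walk (diffC E E') κ E E' hE hE' rfl ⟨a, b, hw⟩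

end SwapProof

/-- Any two realizations of the same bi-degree sequence are connected by a
finite sequence of two-edge and three-edge swaps, all intermediate digraphs
realizing the same bi-degree sequence. -/
theorem swap_connected (n : ℕ) (dp dm : Fin n → ℕ)
    (E₁ E₂ : Fin n → Fin n → Bool)
    (h₁ : Realizes E₁ dp dm) (h₂ : Realizes E₂ dp dm) :
    ∃ (m : ℕ) (f : Fin (m + 1) → (Fin n → Fin n → Bool)),
      f 0 = E₁ ∧ f (Fin.last m) = E₂ ∧
      (∀ j, Realizes (f j) dp dm) ∧
      ∀ j : Fin m, Swap (f j.castSucc) (f j.succ) := by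
  exact SwapProof.reach_main h₁ h₂
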